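/- Let G be a finite directed graph and u, v vertices such that every path from u to v in the underlying undirected graph of G passes through a vertex of T \subseteq V. Then in p-Bernoulli bond percolation on the bunkbed graph conditioned on all vertices of T being posts, \mathbb{P}(u^- \to v^-) = \mathbb{P}(u^- \to v^+). -/

import Mathlib

/-- Edges of the bunkbed graph of a directed graph on vertex type `V`:
`horiz u v ε` is the copy of the directed edge `(u,v)` in bunk `ε`
(`false` = lower bunk `-`, `true` = upper bunk `+`); `vert w` is the
bidirected vertical edge `(w⁻, w⁺)`. -/
inductive BBEdge (V : Type) : Type
  | horiz : V → V → Bool → BBEdge V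
  | vert  : V → BBEdge V
deriving DecidableEq

/-- The `F`-mirroring map on single edges: vertical edges are fixed, a horizontal
edge whose shadow lies in `F` is sent to its mirrored copy in the other bunk, and
horizontal edges with shadow outside `F` are fixed. -/
def mir {V : Type} [DecidableEq V] (F : Finset (V × V)) : BBEdge V → BBEdge V
  | .horiz u v ε => if (u, v) ∈ F then .horiz u v (!ε) else .horiz u v ε
  | .vert w => .vert w

/-- The `F`-mirrored subgraph `M(H,F)`. -/
def M {V : Type} [DecidableEq V] (H : Finset (BBEdge V)) (F : Finset (V × V)) :
    Finset (BBEdge V) :=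
  H.image (mir F)
/-- The edge set of the bunkbed graph of the directed graph with vertex set `Vs`
and edge set `E`: the vertical edges at all vertices together with the two
horizontal copies of each edge. -/
def bbEdges {V : Type} [DecidableEq V] (Vs : Finset V) (E : Finset (V × V)) :
    Finset (BBEdge V) :=
  Vs.image BBEdge.vert ∪ E.image (fun p => BBEdge.horiz p.1 p.2 false) ∪
    E.image (fun p => BBEdge.horiz p.1 p.2 true)

/-- One step of directed traversal in a subgraph `H` of the bunkbed graph:
horizontal edges are used in their direction within a bunk, and vertical edges
may be traversed in both directions. Vertices of the bunkbed graph are pairs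
`(w, ε)` with `ε : Bool` the bunk label (`false` = `-`, `true` = `+`). -/
def bbStep {V : Type} [DecidableEq V] (H : Finset (BBEdge V)) :
    V × Bool → V × Bool → Prop := fun a b =>
  (a.1 = b.1 ∧ a.2 ≠ b.2 ∧ BBEdge.vert a.1 ∈ H) ∨
    (a.2 = b.2 ∧ BBEdge.horiz a.1 b.1 a.2 ∈ H)

/-- Directed reachability `x → y` in a subgraph of the bunkbed graph. -/
def bbReach {V : Type} [DecidableEq V] (H : Finset (BBEdge V))
    (a b : V × Bool) : Prop :=
  Relation.ReflTransGen (bbStep H) a b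

/-- Probability of the event `A` under `p`-Bernoulli bond percolation on the edge
set `s`: each edge of `s` is retained independently with probability `p`. -/
noncomputable def PrB {V : Type} [DecidableEq V] (p : ℝ) (s : Finset (BBEdge V))
    (A : Finset (BBEdge V) → Prop) : ℝ :=
  letI := Classical.decPred A
  ∑ H ∈ s.powerset.filter A, p ^ H.card * (1 - p) ^ (s.card - H.card)

/-- Conditional probability of `A` given `C` in `p`-Bernoulli percolation on `s`. -/
noncomputable def CondPrB {V : Type} [DecidableEq V] (p : ℝ) (s : Finset (BBEdge V))
    (C A : Finset (BBEdge V) → Prop) : ℝ :=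
  PrB p s (fun H => A H ∧ C H) / PrB p s C

/-- The conditioning event of the conditioned bunkbed model `𝓔_T`: all vertices
of `T` are posts. -/
def postCond {V : Type} [DecidableEq V] (T : Finset V)
    (H : Finset (BBEdge V)) : Prop :=
  ∀ t ∈ T, BBEdge.vert t ∈ H

section Aux
variable {V : Type} [DecidableEq V]

lemma mir_invol (F : Finset (V × V)) (e : BBEdge V) : mir F (mir F e) = e := by
  cases e with
  | vert w => rfl
  | horiz x y ε =>
    by_cases h : (x, y) ∈ F <;> simp [mir, h]

lemma M_M (H : Finset (BBEdge V)) (F : Finset (V × V)) : M (M H F) F = H := by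
  simp [M, Finset.image_image, Function.comp_def, mir_invol]

lemma card_M (H : Finset (BBEdge V)) (F : Finset (V × V)) : (M H F).card = H.card :=
  Finset.card_image_of_injective _
    (Function.LeftInverse.injective (g := mir F) (mir_invol F))

lemma vert_mem_M {H : Finset (BBEdge V)} {F : Finset (V × V)} {w : V} :
    BBEdge.vert w ∈ M H F ↔ BBEdge.vert w ∈ H := by
  constructor
  · intro h
    obtain ⟨e, he, hme⟩ := Finset.mem_image.1 h
    cases e with
    | vert x => cases hme; exact he
    | horiz x y ε => simp only [mir] at hme; split at hme <;> cases hme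
  · intro h
    exact Finset.mem_image.2 ⟨_, h, rfl⟩

lemma post_M {T : Finset V} {H : Finset (BBEdge V)} {F : Finset (V × V)} :
    postCond T (M H F) ↔ postCond T H := by
  unfold postCond; simp only [vert_mem_M]

lemma horiz_mem_bbEdges {Vs : Finset V} {E : Finset (V × V)} {x y : V} {ε : Bool} :
    BBEdge.horiz x y ε ∈ bbEdges Vs E ↔ (x, y) ∈ E := by
  unfold bbEdges
  constructor
  · intro h
    simp only [Finset.mem_union, Finset.mem_image] at h
    rcases h with ((⟨w, _, hw⟩ | ⟨q, hq, hq2⟩) | ⟨q, hq, hq2⟩)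
    · cases hw
    · cases hq2; exact hq
    · cases hq2; exact hq
  · intro h
    cases ε
    · exact Finset.mem_union_left _ (Finset.mem_union_right _
        (Finset.mem_image.2 ⟨(x, y), h, rfl⟩))
    · exact Finset.mem_union_right _ (Finset.mem_image.2 ⟨(x, y), h, rfl⟩)

lemma M_subset {Vs : Finset V} {E F : Finset (V × V)} {H : Finset (BBEdge V)}
    (hH : H ⊆ bbEdges Vs E) : M H F ⊆ bbEdges Vs E := by
  intro e' he'
  obtain ⟨e, he, rfl⟩ := Finset.mem_image.1 he'
  cases e with
  | vert w => exact hH he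
  | horiz x y ε =>
    have hxy : (x, y) ∈ E := horiz_mem_bbEdges.1 (hH he)
    simp only [mir]
    split <;> exact horiz_mem_bbEdges.2 hxy

lemma reach_adjust {H : Finset (BBEdge V)} {x : V} {c d : Bool}
    (h : c = d ∨ BBEdge.vert x ∈ H) : bbReach H (x, c) (x, d) := by
  by_cases hcd : c = d
  · subst hcd; exact Relation.ReflTransGen.refl
  · rcases h with h | h
    · exact absurd h hcd
    · exact Relation.ReflTransGen.single (Or.inl ⟨rfl, hcd, h⟩)

lemma step_mirror {Vs T : Finset V} {E F : Finset (V × V)} {f : V → Bool}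
    (hF1 : ∀ x y, (x, y) ∈ F → (f x = true ∨ x ∈ T) ∧ (f y = true ∨ y ∈ T))
    (hF2 : ∀ x y, (x, y) ∈ E → (x, y) ∉ F → (f x = false ∨ x ∈ T) ∧ (f y = false ∨ y ∈ T))
    {H : Finset (BBEdge V)} (hH : H ⊆ bbEdges Vs E) (hpost : postCond T H)
    {a b : V × Bool} (hab : bbStep H a b) :
    bbReach (M H F) (a.1, xor a.2 (f a.1)) (b.1, xor b.2 (f b.1)) := by
  rcases hab with ⟨h1, h2, h3⟩ | ⟨h1, h2⟩
  · -- vertical step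
    rw [h1] at *
    refine Relation.ReflTransGen.single (Or.inl ⟨rfl, ?_, vert_mem_M.2 h3⟩)
    simp only [ne_eq]
    intro hc
    exact h2 (by
      cases a.2 <;> cases b.2 <;> cases f b.1 <;> simp_all)
  · -- horizontal step
    obtain ⟨x, ε⟩ := a
    obtain ⟨y, ε'⟩ := b
    simp only at h1 h2 ⊢
    subst h1
    have hxy : (x, y) ∈ E := horiz_mem_bbEdges.1 (hH h2)
    have postx : x ∈ T → BBEdge.vert x ∈ M H F := fun h => vert_mem_M.2 (hpost x h)
    have posty : y ∈ T → BBEdge.vert y ∈ M H F := fun h => vert_mem_M.2 (hpost y h)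
    by_cases hF : (x, y) ∈ F
    · have hm : BBEdge.horiz x y (!ε) ∈ M H F := by
        have := Finset.mem_image_of_mem (mir F) h2
        simpa only [M, mir, if_pos hF] using this
      obtain ⟨hx, hy⟩ := hF1 x y hF
      have r1 : bbReach (M H F) (x, xor ε (f x)) (x, !ε) :=
        reach_adjust (by
          rcases hx with hx | hx
          · left; rw [hx]; cases ε <;> rfl
          · right; exact postx hx)
      have r2 : bbReach (M H F) (y, !ε) (y, xor ε (f y)) :=
        reach_adjust (by
          rcases hy with hy | hy
          · left; rw [hy]; cases ε <;> rfl
          · right; exact posty hy)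
      have hstep : bbStep (M H F) (x, !ε) (y, !ε) := Or.inr ⟨rfl, hm⟩
      exact (r1.tail hstep).trans r2
    · have hm : BBEdge.horiz x y ε ∈ M H F := by
        have := Finset.mem_image_of_mem (mir F) h2
        simpa only [M, mir, if_neg hF] using this
      obtain ⟨hx, hy⟩ := hF2 x y hxy hF
      have r1 : bbReach (M H F) (x, xor ε (f x)) (x, ε) :=
        reach_adjust (by
          rcases hx with hx | hx
          · left; rw [hx]; cases ε <;> rfl
          · right; exact postx hx)
      have r2 : bbReach (M H F) (y, ε) (y, xor ε (f y)) :=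
        reach_adjust (by
          rcases hy with hy | hy
          · left; rw [hy]; cases ε <;> rfl
          · right; exact posty hy)
      have hstep : bbStep (M H F) (x, ε) (y, ε) := Or.inr ⟨rfl, hm⟩
      exact (r1.tail hstep).trans r2

lemma reach_mirror {Vs T : Finset V} {E F : Finset (V × V)} {f : V → Bool}
    (hF1 : ∀ x y, (x, y) ∈ F → (f x = true ∨ x ∈ T) ∧ (f y = true ∨ y ∈ T))
    (hF2 : ∀ x y, (x, y) ∈ E → (x, y) ∉ F → (f x = false ∨ x ∈ T) ∧ (f y = false ∨ y ∈ T))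
    {H : Finset (BBEdge V)} (hH : H ⊆ bbEdges Vs E) (hpost : postCond T H)
    {a b : V × Bool} (hab : bbReach H a b) :
    bbReach (M H F) (a.1, xor a.2 (f a.1)) (b.1, xor b.2 (f b.1)) := by
  induction hab with
  | refl => exact Relation.ReflTransGen.refl
  | tail _ hstep ih => exact ih.trans (step_mirror hF1 hF2 hH hpost hstep)

lemma reach_iff {Vs T : Finset V} {E F : Finset (V × V)} {f : V → Bool}
    (hF1 : ∀ x y, (x, y) ∈ F → (f x = true ∨ x ∈ T) ∧ (f y = true ∨ y ∈ T))
    (hF2 : ∀ x y, (x, y) ∈ E → (x, y) ∉ F → (f x = false ∨ x ∈ T) ∧ (f y = false ∨ y ∈ T))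
    {u v : V} (hfu : f u = false) (hfv : f v = true)
    {H : Finset (BBEdge V)} (hH : H ⊆ bbEdges Vs E) (hpost : postCond T H) :
    (bbReach H (u, false) (v, false) ↔ bbReach (M H F) (u, false) (v, true)) := by
  constructor
  · intro h
    have := reach_mirror hF1 hF2 hH hpost h
    simpa [hfu, hfv] using this
  · intro h
    have := reach_mirror hF1 hF2 (M_subset hH) (post_M.2 hpost) h
    rw [M_M] at this
    simpa [hfu, hfv] using this

lemma PrB_mirror {Vs T : Finset V} {E F : Finset (V × V)} {f : V → Bool}
    (hF1 : ∀ x y, (x, y) ∈ F → (f x = true ∨ x ∈ T) ∧ (f y = true ∨ y ∈ T))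
    (hF2 : ∀ x y, (x, y) ∈ E → (x, y) ∉ F → (f x = false ∨ x ∈ T) ∧ (f y = false ∨ y ∈ T))
    {u v : V} (hfu : f u = false) (hfv : f v = true) (p : ℝ) :
    PrB p (bbEdges Vs E) (fun H => bbReach H (u, false) (v, false) ∧ postCond T H) =
      PrB p (bbEdges Vs E) (fun H => bbReach H (u, false) (v, true) ∧ postCond T H) := by
  classical
  unfold PrB
  refine Finset.sum_nbij' (fun H => M H F) (fun H => M H F) ?_ ?_ ?_ ?_ ?_
  · intro H hH
    simp only [Finset.mem_filter, Finset.mem_powerset] at hH ⊢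
    obtain ⟨hsub, hreach, hpost⟩ := hH
    exact ⟨M_subset hsub, (reach_iff hF1 hF2 hfu hfv hsub hpost).1 hreach, post_M.2 hpost⟩
  · intro H hH
    simp only [Finset.mem_filter, Finset.mem_powerset] at hH ⊢
    obtain ⟨hsub, hreach, hpost⟩ := hH
    refine ⟨M_subset hsub, ?_, post_M.2 hpost⟩
    exact (reach_iff hF1 hF2 hfu hfv (M_subset hsub) (post_M.2 hpost)).2
      (by rwa [M_M])
  · intro H _; exact M_M H F
  · intro H _; exact M_M H F
  · intro H _; rw [card_M]

end Aux

/-- if every path from `u` to `v` in the underlying undirected graph of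
a finite directed graph `G` passes through a vertex of `T` (expressed: there is no
undirected walk from `u` to `v` avoiding `T`), then in `p`-Bernoulli bond percolation
on the bunkbed graph conditioned on all vertices of `T` being posts,
`ℙ(u⁻ → v⁻) = ℙ(u⁻ → v⁺)`. -/
theorem conditioned_cutset_symmetry {V : Type} [DecidableEq V]
    (Vs : Finset V) (E : Finset (V × V)) (T : Finset V) (hT : T ⊆ Vs)
    (u v : V) (hu : u ∈ Vs) (hv : v ∈ Vs)
    (hcut : ¬ Relation.ReflTransGen
      (fun x y => ((x, y) ∈ E ∨ (y, x) ∈ E) ∧ x ∉ T ∧ y ∉ T) u v)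
    (p : ℝ) (hp0 : 0 ≤ p) (hp1 : p ≤ 1) :
    CondPrB p (bbEdges Vs E) (postCond T) (fun H => bbReach H (u, false) (v, false)) =
      CondPrB p (bbEdges Vs E) (postCond T) (fun H => bbReach H (u, false) (v, true)) := by
  classical
  unfold CondPrB
  congr 1
  set step : V → V → Prop := fun x y => ((x, y) ∈ E ∨ (y, x) ∈ E) ∧ x ∉ T ∧ y ∉ T with hstep
  by_cases huT : u ∈ T
  · -- flip everything except u; F = E
    refine PrB_mirror (T := T) (F := E) (f := fun w => decide (w ≠ u)) ?_ ?_ ?_ ?_ p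
    · intro x y _
      constructor
      · by_cases hx : x = u
        · right; rw [hx]; exact huT
        · left; simp [hx]
      · by_cases hy : y = u
        · right; rw [hy]; exact huT
        · left; simp [hy]
    · intro x y hxy hnxy; exact absurd hxy hnxy
    · simp
    · have : v ≠ u := by
        intro h; exact hcut (h ▸ Relation.ReflTransGen.refl)
      simp [this]
  · -- flip the complement of S
    have key : ∀ x, Relation.ReflTransGen step u x → x ∈ T → x = u := by
      intro x hx hxT
      rcases (Relation.ReflTransGen.cases_tail hx) with h | ⟨c, _, hc⟩
      · exact h
      · exact absurd hxT hc.2.2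
    refine PrB_mirror (T := T) (F := E.filter (fun q =>
        ¬ Relation.ReflTransGen step u q.1 ∧ ¬ Relation.ReflTransGen step u q.2))
      (f := fun w => decide (¬ Relation.ReflTransGen step u w)) ?_ ?_ ?_ ?_ p
    · intro x y hxy
      rw [Finset.mem_filter] at hxy
      exact ⟨Or.inl (by simp [hxy.2.1]), Or.inl (by simp [hxy.2.2])⟩
    · intro x y hxy hnxy
      rw [Finset.mem_filter, not_and_or] at hnxy
      have hR : Relation.ReflTransGen step u x ∨ Relation.ReflTransGen step u y := by
        rcases hnxy with h | h
        · exact absurd hxy h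
        · rw [not_and_or, not_not, not_not] at h
          exact h
      constructor
      · by_cases hx : Relation.ReflTransGen step u x
        · left; simp [hx]
        · -- x not in S, so y in S; if x ∉ T we'd get x ∈ S
          right
          by_contra hxT
          have hy : Relation.ReflTransGen step u y := by
            rcases hR with h | h
            · exact absurd h hx
            · exact h
          have hyT : y ∉ T := by
            intro h
            exact huT ((key y hy h) ▸ h)
          exact hx (hy.tail ⟨Or.inr hxy, hyT, hxT⟩)
      · by_cases hy : Relation.ReflTransGen step u y
        · left; simp [hy]
        · right
          by_contra hyT
          have hx : Relation.ReflTransGen step u x := by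
            rcases hR with h | h
            · exact h
            · exact absurd h hy
          have hxT : x ∉ T := by
            intro h
            exact huT ((key x hx h) ▸ h)
          exact hy (hx.tail ⟨Or.inl hxy, hxT, hyT⟩)
    · simp [Relation.ReflTransGen.refl]
    · simp [hcut]
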